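/- Let p : D ⥤ B be a discrete fibration between small categories, let F, G : B' ⥤ B be functors from a small category B', and let σ : F ⟶ G be a natural transformation. Suppose given strict pullback squares in Cat exhibiting D'₁ (with projection p₁ : D'₁ ⥤ B' and top functor F̄ : D'₁ ⥤ D, satisfying F̄ ⋙ p = p₁ ⋙ F) as the pullback of p along F, and D'₂ (with projection p₂ : D'₂ ⥤ B' and top functor Ḡ : D'₂ ⥤ D, satisfying Ḡ ⋙ p = p₂ ⋙ G) as the pullback of p along G. Then there exists a unique pair (σ*, σ̄) consisting of a functor σ* : D'₂ ⥤ D'₁ with p₁ ∘ σ* = p₂ and a natural transformation σ̄ : σ* ⋙ F̄ ⟶ Ḡ such that for every object x of D'₂ the morphism p(σ̄ₓ) equals the component σ at p₂(x) (under the strict identifications p((σ* ⋙ F̄)(x)) = F(p₂(x)) and p(Ḡ(x)) = G(p₂(x)) provided by the commuting pullback squares). -/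

import Mathlib

open CategoryTheory

universe u

/-- A functor `p : E ⥤ B` is a discrete fibration if for every object `e` of `E` and every
morphism `f : b ⟶ p.obj e` in `B` there is a unique pair `(e', g : e' ⟶ e)` with
`p.obj e' = b` and `p.map g = f` (up to the identification `p.obj e' = b`). -/
def IsDiscreteFibration {E B : Type*} [Category E] [Category B] (p : E ⥤ B) : Prop :=
  ∀ {e : E} {b : B} (f : b ⟶ p.obj e),
    ∃! eg : Σ e' : E, e' ⟶ e,
      ∃ h : p.obj eg.1 = b, p.map eg.2 = eqToHom h ≫ f

attribute [reducible] IsDiscreteFibration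

section DF
variable {D B : Type u} [SmallCategory D] [SmallCategory B] {p : D ⥤ B}

theorem DF.unique (hp : IsDiscreteFibration p) {e : D} {b : B} (f : b ⟶ p.obj e)
    {e₁ e₂ : D} (g₁ : e₁ ⟶ e) (g₂ : e₂ ⟶ e)
    (h₁ : p.obj e₁ = b) (hg₁ : p.map g₁ = eqToHom h₁ ≫ f)
    (h₂ : p.obj e₂ = b) (hg₂ : p.map g₂ = eqToHom h₂ ≫ f) :
    ∃ h : e₁ = e₂, g₁ = eqToHom h ≫ g₂ := by
  obtain ⟨s, -, hu⟩ := hp f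
  have h := (hu ⟨e₁, g₁⟩ ⟨h₁, hg₁⟩).trans (hu ⟨e₂, g₂⟩ ⟨h₂, hg₂⟩).symm
  obtain ⟨he, hg⟩ := Sigma.mk.inj_iff.mp h
  subst he
  exact ⟨rfl, by simpa using eq_of_heq hg⟩

theorem DF.hom_ext (hp : IsDiscreteFibration p) {a b : D} {g₁ g₂ : a ⟶ b}
    (h : p.map g₁ = p.map g₂) : g₁ = g₂ := by
  obtain ⟨h', hg⟩ := DF.unique hp (p.map g₂) g₁ g₂ rfl (by simp [h]) rfl (by simp)
  simpa using hg

end DF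

section Trans
variable {B B' D D₂ : Type u} [SmallCategory B] [SmallCategory B']
  [SmallCategory D] [SmallCategory D₂]
variable {p : D ⥤ B} {F G : B' ⥤ B} {p₂ : D₂ ⥤ B'} {Gbar : D₂ ⥤ D}
variable (hp : IsDiscreteFibration p) (σ : F ⟶ G) (hcomm₂ : Gbar ⋙ p = p₂ ⋙ G)

noncomputable def transLift (x : D₂) : Σ e' : D, e' ⟶ Gbar.obj x :=
  (hp (σ.app (p₂.obj x) ≫ eqToHom (Functor.congr_obj hcomm₂ x).symm)).exists.choose

noncomputable def transObj (x : D₂) : D := (transLift hp σ hcomm₂ x).1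

noncomputable def transHom (x : D₂) : transObj hp σ hcomm₂ x ⟶ Gbar.obj x :=
  (transLift hp σ hcomm₂ x).2

theorem transObj_p (x : D₂) : p.obj (transObj hp σ hcomm₂ x) = F.obj (p₂.obj x) :=
  (hp (σ.app (p₂.obj x) ≫ eqToHom (Functor.congr_obj hcomm₂ x).symm)).exists.choose_spec.choose

theorem transHom_p (x : D₂) :
    p.map (transHom hp σ hcomm₂ x) =
      eqToHom (transObj_p hp σ hcomm₂ x) ≫ σ.app (p₂.obj x) ≫
        eqToHom (Functor.congr_obj hcomm₂ x).symm := by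
  have h := (hp (σ.app (p₂.obj x) ≫
    eqToHom (Functor.congr_obj hcomm₂ x).symm)).exists.choose_spec.choose_spec
  exact h

noncomputable def transMapLift {x y : D₂} (f : x ⟶ y) :
    Σ e' : D, e' ⟶ transObj hp σ hcomm₂ y :=
  (hp (F.map (p₂.map f) ≫ eqToHom (transObj_p hp σ hcomm₂ y).symm)).exists.choose

theorem transMapLift_p {x y : D₂} (f : x ⟶ y) :
    p.obj (transMapLift hp σ hcomm₂ f).1 = F.obj (p₂.obj x) :=
  (hp (F.map (p₂.map f) ≫ eqToHom (transObj_p hp σ hcomm₂ y).symm)).exists.choose_spec.choose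

theorem transMapLift_map {x y : D₂} (f : x ⟶ y) :
    p.map (transMapLift hp σ hcomm₂ f).2 =
      eqToHom (transMapLift_p hp σ hcomm₂ f) ≫ F.map (p₂.map f) ≫
        eqToHom (transObj_p hp σ hcomm₂ y).symm := by
  have h := (hp (F.map (p₂.map f) ≫
    eqToHom (transObj_p hp σ hcomm₂ y).symm)).exists.choose_spec.choose_spec
  exact h

set_option maxRecDepth 4000 in
theorem transMapLift_fst {x y : D₂} (f : x ⟶ y) :
    (transMapLift hp σ hcomm₂ f).1 = transObj hp σ hcomm₂ x := by
  obtain ⟨h, -⟩ := DF.unique hp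
    (F.map (p₂.map f) ≫ σ.app (p₂.obj y) ≫ eqToHom (Functor.congr_obj hcomm₂ y).symm)
    ((transMapLift hp σ hcomm₂ f).2 ≫ transHom hp σ hcomm₂ y)
    (transHom hp σ hcomm₂ x ≫ Gbar.map f)
    (transMapLift_p hp σ hcomm₂ f)
    (by
      rw [Functor.map_comp, transMapLift_map, transHom_p]
      simp only [Category.assoc, eqToHom_trans_assoc, eqToHom_refl, Category.id_comp])
    (transObj_p hp σ hcomm₂ x)
    (by
      have hG := Functor.congr_hom hcomm₂ f
      simp only [Functor.comp_map] at hG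
      rw [Functor.map_comp, transHom_p, hG]
      simp only [Category.assoc, eqToHom_trans_assoc, eqToHom_refl, Category.id_comp]
      rw [← NatTrans.naturality_assoc])
  exact h

noncomputable def transMap {x y : D₂} (f : x ⟶ y) :
    transObj hp σ hcomm₂ x ⟶ transObj hp σ hcomm₂ y :=
  eqToHom (transMapLift_fst hp σ hcomm₂ f).symm ≫ (transMapLift hp σ hcomm₂ f).2

theorem transMap_p {x y : D₂} (f : x ⟶ y) :
    p.map (transMap hp σ hcomm₂ f) =
      eqToHom (transObj_p hp σ hcomm₂ x) ≫ F.map (p₂.map f) ≫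
        eqToHom (transObj_p hp σ hcomm₂ y).symm := by
  simp [transMap, transMapLift_map, eqToHom_map]

@[reducible] noncomputable def transFunctor : D₂ ⥤ D where
  obj := transObj hp σ hcomm₂
  map := transMap hp σ hcomm₂
  map_id x := DF.hom_ext hp (by simp [transMap_p])
  map_comp f g := DF.hom_ext hp (by simp [transMap_p])

theorem transFunctor_comp_p : transFunctor hp σ hcomm₂ ⋙ p = p₂ ⋙ F :=
  CategoryTheory.Functor.ext (transObj_p hp σ hcomm₂)
    (fun x y f => by exact transMap_p hp σ hcomm₂ f)

end Trans

section Trans2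
variable {B B' D D₂ : Type u} [SmallCategory B] [SmallCategory B']
  [SmallCategory D] [SmallCategory D₂]
variable {p : D ⥤ B} {F G : B' ⥤ B} {p₂ : D₂ ⥤ B'} {Gbar : D₂ ⥤ D}
variable (hp : IsDiscreteFibration p) (σ : F ⟶ G) (hcomm₂ : Gbar ⋙ p = p₂ ⋙ G)

theorem transHom_natural {x y : D₂} (f : x ⟶ y) :
    transMap hp σ hcomm₂ f ≫ transHom hp σ hcomm₂ y =
      transHom hp σ hcomm₂ x ≫ Gbar.map f :=
  DF.hom_ext hp (by
    have hG := Functor.congr_hom hcomm₂ f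
    simp only [Functor.comp_map] at hG
    rw [Functor.map_comp, Functor.map_comp, transMap_p, transHom_p, transHom_p, hG]
    simp only [Category.assoc, eqToHom_trans_assoc, eqToHom_refl, Category.id_comp]
    rw [← NatTrans.naturality_assoc])

@[simp] theorem transFunctor_map {x y : D₂} (f : x ⟶ y) :
    (transFunctor hp σ hcomm₂).map f = transMap hp σ hcomm₂ f := rfl

noncomputable def transNat {D₁ : Type u} [SmallCategory D₁]
    (σs : D₂ ⥤ D₁) {Fbar : D₁ ⥤ D}
    (h1 : σs ⋙ Fbar = transFunctor hp σ hcomm₂) : σs ⋙ Fbar ⟶ Gbar where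
  app x := eqToHom (Functor.congr_obj h1 x) ≫ transHom hp σ hcomm₂ x
  naturality x y f := by
    have hf := Functor.congr_hom h1 f
    rw [hf, transFunctor_map]
    simp only [Category.assoc, eqToHom_trans_assoc, eqToHom_refl, Category.id_comp]
    rw [transHom_natural]

end Trans2

/-- Given a discrete fibration `p : D ⥤ B`, a natural transformation `σ : F ⟶ G` between
functors `B' ⥤ B`, and pullback squares in `Cat` exhibiting `D₁` and `D₂` as the base
changes of `p` along `F` and `G` respectively, there is a unique pair `(σ*, σ̄)` of a
functor `σ* : D₂ ⥤ D₁` over `B'` and a natural transformation `σ̄ : σ* ⋙ F̄ ⟶ Ḡ`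
lying over `σ`. -/
theorem base_change_of_natural_transformation
    {B B' D D₁ D₂ : Type u} [SmallCategory B] [SmallCategory B']
    [SmallCategory D] [SmallCategory D₁] [SmallCategory D₂]
    (p : D ⥤ B) (hp : IsDiscreteFibration p)
    (F G : B' ⥤ B) (σ : F ⟶ G)
    (p₁ : D₁ ⥤ B') (Fbar : D₁ ⥤ D) (hcomm₁ : Fbar ⋙ p = p₁ ⋙ F)
    (hpb₁ : IsPullback (C := Cat.{u, u})
      (show Cat.of D₁ ⟶ Cat.of D from Fbar.toCatHom)
      (show Cat.of D₁ ⟶ Cat.of B' from p₁.toCatHom)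
      (show Cat.of D ⟶ Cat.of B from p.toCatHom)
      (show Cat.of B' ⟶ Cat.of B from F.toCatHom))
    (p₂ : D₂ ⥤ B') (Gbar : D₂ ⥤ D) (hcomm₂ : Gbar ⋙ p = p₂ ⋙ G)
    (hpb₂ : IsPullback (C := Cat.{u, u})
      (show Cat.of D₂ ⟶ Cat.of D from Gbar.toCatHom)
      (show Cat.of D₂ ⟶ Cat.of B' from p₂.toCatHom)
      (show Cat.of D ⟶ Cat.of B from p.toCatHom)
      (show Cat.of B' ⟶ Cat.of B from G.toCatHom)) :
    ∃! q : Σ' (σs : D₂ ⥤ D₁), (σs ⋙ Fbar ⟶ Gbar),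
      ∃ h : q.1 ⋙ p₁ = p₂,
        ∀ x : D₂, p.map (q.2.app x) =
          eqToHom (show p.obj ((q.1 ⋙ Fbar).obj x) = F.obj (p₂.obj x) by
            have h1 := Functor.congr_obj hcomm₁ (q.1.obj x)
            have h2 := Functor.congr_obj h x
            simp only [Functor.comp_obj] at h1 h2 ⊢
            rw [h1, h2]) ≫
          σ.app (p₂.obj x) ≫
          eqToHom (Functor.congr_obj hcomm₂ x).symm := by
  have w : (show Cat.of D₂ ⟶ Cat.of D from (transFunctor hp σ hcomm₂).toCatHom) ≫
      (show Cat.of D ⟶ Cat.of B from p.toCatHom) =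
      (show Cat.of D₂ ⟶ Cat.of B' from p₂.toCatHom) ≫ (show Cat.of B' ⟶ Cat.of B from F.toCatHom) :=
    congrArg Functor.toCatHom (transFunctor_comp_p hp σ hcomm₂)
  let σs : D₂ ⥤ D₁ := (hpb₁.lift _ _ w).toFunctor
  have h1 : σs ⋙ Fbar = transFunctor hp σ hcomm₂ := congrArg Cat.Hom.toFunctor (hpb₁.lift_fst _ _ w)
  have h2 : σs ⋙ p₁ = p₂ := congrArg Cat.Hom.toFunctor (hpb₁.lift_snd _ _ w)
  refine ⟨⟨σs, transNat hp σ hcomm₂ σs h1⟩, ⟨h2, fun x => ?_⟩, ?_⟩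
  · show p.map (eqToHom (Functor.congr_obj h1 x) ≫ transHom hp σ hcomm₂ x) = _
    rw [Functor.map_comp, eqToHom_map, transHom_p]
    simp only [eqToHom_trans_assoc]
  · rintro ⟨σs', τ⟩ ⟨h', hc⟩
    have hobj : ∀ x : D₂, ∃ hx : Fbar.obj (σs'.obj x) = transObj hp σ hcomm₂ x,
        τ.app x = eqToHom hx ≫ transHom hp σ hcomm₂ x := by
      intro x
      exact DF.unique hp
        (σ.app (p₂.obj x) ≫ eqToHom (Functor.congr_obj hcomm₂ x).symm)
        (τ.app x) (transHom hp σ hcomm₂ x)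
        (by
          have e1 := Functor.congr_obj hcomm₁ (σs'.obj x)
          have e2 := Functor.congr_obj h' x
          simp only [Functor.comp_obj] at e1 e2 ⊢
          rw [e1, e2])
        (hc x)
        (transObj_p hp σ hcomm₂ x)
        (transHom_p hp σ hcomm₂ x)
    have hFeq : σs' ⋙ Fbar = transFunctor hp σ hcomm₂ := by
      refine CategoryTheory.Functor.ext (fun x => (hobj x).choose) (fun x y f => ?_)
      refine DF.hom_ext hp ?_
      have hf1 := Functor.congr_hom hcomm₁ (σs'.map f)
      have hf2 := Functor.congr_hom h' f
      simp only [Functor.comp_map] at hf1 hf2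
      rw [Functor.comp_map, hf1, hf2]
      simp only [Functor.map_comp, eqToHom_map, transFunctor_map, transMap_p,
        Category.assoc, eqToHom_trans, eqToHom_trans_assoc]
    have hs : σs' = σs := congrArg Cat.Hom.toFunctor (
      hpb₁.hom_ext (k := show Cat.of D₂ ⟶ Cat.of D₁ from σs'.toCatHom)
        (l := show Cat.of D₂ ⟶ Cat.of D₁ from σs.toCatHom)
        (congrArg Functor.toCatHom (hFeq.trans h1.symm)) (congrArg Functor.toCatHom (h'.trans h2.symm)))
    subst hs
    have hτ : τ = transNat hp σ hcomm₂ σs h1 := by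
      ext x
      rw [(hobj x).choose_spec]
      rfl
    rw [hτ]
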